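/- arXiv:1808.04464 — 3 statements merged into one kernel-verified Lean document; each statement's English description precedes it below -/
import Mathlib

section
/- The soft-max function is ε-cocoercive: for every ε > 0 and all z, z' ∈ ℝⁿ, (σ_ε(z) − σ_ε(z'))ᵀ(z − z') ≥ ε‖σ_ε(z) − σ_ε(z')‖₂². -/
/-- The soft-max function with temperature `ε`. -/
noncomputable def softmax (ε : ℝ) {n : ℕ} (z : Fin n → ℝ) : Fin n → ℝ :=
  fun i => Real.exp (z i / ε) / ∑ j, Real.exp (z j / ε)

lemma key_log_ineq {a b : ℝ} (ha : 0 < a) (ha1 : a ≤ 1) (hb : 0 < b) (hb1 : b ≤ 1) :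
    (a - b) ^ 2 ≤ (a - b) * (Real.log a - Real.log b) := by
  rcases le_total b a with h | h
  · have h1 : Real.log (b / a) ≤ b / a - 1 := Real.log_le_sub_one_of_pos (by positivity)
    rw [Real.log_div hb.ne' ha.ne'] at h1
    have h2 : b / a - 1 = -((a - b) / a) := by field_simp; ring
    have h3 : a - b ≤ (a - b) / a := by
      rw [le_div_iff₀ ha]; nlinarith
    nlinarith
  · have h1 : Real.log (a / b) ≤ a / b - 1 := Real.log_le_sub_one_of_pos (by positivity)
    rw [Real.log_div ha.ne' hb.ne'] at h1
    have h3 : b - a ≤ (b - a) / b := by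
      rw [le_div_iff₀ hb]; nlinarith
    have h2 : a / b - 1 = -((b - a) / b) := by field_simp; ring
    nlinarith

/-- The soft-max function is `ε`-cocoercive:
`(σ_ε(z) − σ_ε(z'))ᵀ(z − z') ≥ ε ‖σ_ε(z) − σ_ε(z')‖₂²`. -/
theorem softmax_cocoercive (ε : ℝ) (hε : 0 < ε) (n : ℕ) (z z' : Fin n → ℝ) :
    ∑ i, (softmax ε z i - softmax ε z' i) * (z i - z' i) ≥
      ε * ∑ i, (softmax ε z i - softmax ε z' i) ^ 2 := by
  rcases Nat.eq_zero_or_pos n with hn | hn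
  · subst hn; simp
  have hne : Nonempty (Fin n) := ⟨⟨0, hn⟩⟩
  set p : Fin n → ℝ := softmax ε z with hp
  set q : Fin n → ℝ := softmax ε z' with hq
  set S : ℝ := ∑ j, Real.exp (z j / ε) with hS
  set S' : ℝ := ∑ j, Real.exp (z' j / ε) with hS'
  have hSpos : 0 < S := Finset.sum_pos (fun j _ => Real.exp_pos _) Finset.univ_nonempty
  have hS'pos : 0 < S' := Finset.sum_pos (fun j _ => Real.exp_pos _) Finset.univ_nonempty
  have hppos : ∀ i, 0 < p i := fun i => div_pos (Real.exp_pos _) hSpos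
  have hqpos : ∀ i, 0 < q i := fun i => div_pos (Real.exp_pos _) hS'pos
  have hple : ∀ i, p i ≤ 1 := by
    intro i
    rw [hp, softmax, div_le_one hSpos]
    exact Finset.single_le_sum (f := fun j => Real.exp (z j / ε))
      (fun j _ => (Real.exp_pos _).le) (Finset.mem_univ i)
  have hqle : ∀ i, q i ≤ 1 := by
    intro i
    rw [hq, softmax, div_le_one hS'pos]
    exact Finset.single_le_sum (f := fun j => Real.exp (z' j / ε))
      (fun j _ => (Real.exp_pos _).le) (Finset.mem_univ i)
  have hpsum : ∑ i, p i = 1 := by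
    rw [hp]; unfold softmax
    rw [← Finset.sum_div, ← hS, div_self hSpos.ne']
  have hqsum : ∑ i, q i = 1 := by
    rw [hq]; unfold softmax
    rw [← Finset.sum_div, ← hS', div_self hS'pos.ne']
  have hlogp : ∀ i, Real.log (p i) = z i / ε - Real.log S := by
    intro i
    rw [hp, softmax, Real.log_div (Real.exp_ne_zero _) hSpos.ne', Real.log_exp]
  have hlogq : ∀ i, Real.log (q i) = z' i / ε - Real.log S' := by
    intro i
    rw [hq, softmax, Real.log_div (Real.exp_ne_zero _) hS'pos.ne', Real.log_exp]
  have hpt : ∀ i, (p i - q i) * (z i - z' i)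
      = ε * ((p i - q i) * (Real.log (p i) - Real.log (q i)))
        + ε * (Real.log S - Real.log S') * (p i - q i) := by
    intro i
    rw [hlogp i, hlogq i]
    field_simp
    ring
  have hsum : ∑ i, (p i - q i) * (z i - z' i)
      = ε * ∑ i, (p i - q i) * (Real.log (p i) - Real.log (q i)) := by
    calc ∑ i, (p i - q i) * (z i - z' i)
        = ∑ i, (ε * ((p i - q i) * (Real.log (p i) - Real.log (q i)))
            + ε * (Real.log S - Real.log S') * (p i - q i)) :=
          Finset.sum_congr rfl (fun i _ => hpt i)
      _ = ε * ∑ i, (p i - q i) * (Real.log (p i) - Real.log (q i))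
            + ε * (Real.log S - Real.log S') * ∑ i, (p i - q i) := by
          rw [Finset.sum_add_distrib, ← Finset.mul_sum, ← Finset.mul_sum]
      _ = ε * ∑ i, (p i - q i) * (Real.log (p i) - Real.log (q i)) := by
          rw [Finset.sum_sub_distrib, hpsum, hqsum]
          ring
  rw [ge_iff_le, hsum]
  apply mul_le_mul_of_nonneg_left _ hε.le
  exact Finset.sum_le_sum fun i _ =>
    key_log_ineq (hppos i) (hple i) (hqpos i) (hqle i)
end

section
/- The Bregman divergence of the log-sum-exp function is sandwiched between the squared soft-max increment and the squared score increment: for every ε > 0 and all z, z̄ ∈ ℝⁿ, (ε/2)·‖σ_ε(z) − σ_ε(z̄)‖₂² ≤ lse_ε(z) − lse_ε(z̄) − σ_ε(z̄)ᵀ(z − z̄) ≤ (1/(2ε))·‖z − z̄‖₂². -/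
/-- The log-sum-exp function with temperature `ε`. -/
noncomputable def lse (ε : ℝ) {n : ℕ} (z : Fin n → ℝ) : ℝ :=
  ε * Real.log (∑ j, Real.exp (z j / ε))

section aux

open Real Finset

variable {n : ℕ} (ε : ℝ) (x d : Fin n → ℝ)

private noncomputable def Sf (t : ℝ) : ℝ := ∑ j, Real.exp ((x j + t * d j) / ε)
private noncomputable def Sf1 (t : ℝ) : ℝ :=
  ∑ j, (d j / ε) * Real.exp ((x j + t * d j) / ε)
private noncomputable def Sf2 (t : ℝ) : ℝ :=
  ∑ j, (d j / ε) ^ 2 * Real.exp ((x j + t * d j) / ε)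

private lemma hasDerivAt_inner (j : Fin n) (t : ℝ) :
    HasDerivAt (fun t => (x j + t * d j) / ε) (d j / ε) t := by
  have h : HasDerivAt (fun t : ℝ => x j + t * d j) (d j) t := by
    simpa using ((hasDerivAt_id t).mul_const (d j)).const_add (x j)
  exact h.div_const ε

private lemma hasDerivAt_Sf (t : ℝ) : HasDerivAt (Sf ε x d) (Sf1 ε x d t) t := by
  refine HasDerivAt.fun_sum fun j _ => ?_
  have := ((hasDerivAt_inner ε x d j t).exp)
  simpa [mul_comm] using this

private lemma hasDerivAt_Sf1 (t : ℝ) : HasDerivAt (Sf1 ε x d) (Sf2 ε x d t) t := by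
  refine HasDerivAt.fun_sum fun j _ => ?_
  have := ((hasDerivAt_inner ε x d j t).exp).const_mul (d j / ε)
  simpa [pow_two, mul_assoc, mul_comm, mul_left_comm] using this

variable [NeZero n]

private lemma Sf_pos (t : ℝ) : 0 < Sf ε x d t :=
  Finset.sum_pos (fun j _ => Real.exp_pos _) ⟨⟨0, Nat.pos_of_ne_zero (NeZero.ne n)⟩, mem_univ _⟩

private noncomputable def Ff (t : ℝ) : ℝ := ε * Real.log (Sf ε x d t)
private noncomputable def Ff1 (t : ℝ) : ℝ := ε * (Sf1 ε x d t / Sf ε x d t)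

private lemma hasDerivAt_Ff (t : ℝ) : HasDerivAt (Ff ε x d) (Ff1 ε x d t) t :=
  ((hasDerivAt_Sf ε x d t).log (Sf_pos ε x d t).ne').const_mul ε

private lemma hasDerivAt_Ff1 (t : ℝ) :
    HasDerivAt (Ff1 ε x d)
      (ε * ((Sf2 ε x d t * Sf ε x d t - Sf1 ε x d t * Sf1 ε x d t) / Sf ε x d t ^ 2)) t :=
  ((hasDerivAt_Sf1 ε x d t).div (hasDerivAt_Sf ε x d t) (Sf_pos ε x d t).ne').const_mul ε

variable {ε}

private lemma Ff2_nonneg (hε : 0 < ε) (t : ℝ) :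
    0 ≤ ε * ((Sf2 ε x d t * Sf ε x d t - Sf1 ε x d t * Sf1 ε x d t) / Sf ε x d t ^ 2) := by
  have hcs : Sf1 ε x d t ^ 2 ≤ Sf2 ε x d t * Sf ε x d t := by
    have := Finset.sum_mul_sq_le_sq_mul_sq Finset.univ
      (fun j => (d j / ε) * Real.sqrt (Real.exp ((x j + t * d j) / ε)))
      (fun j => Real.sqrt (Real.exp ((x j + t * d j) / ε)))
    have e1 : ∀ j : Fin n, (d j / ε) * Real.sqrt (Real.exp ((x j + t * d j) / ε)) *
        Real.sqrt (Real.exp ((x j + t * d j) / ε)) = (d j / ε) * Real.exp ((x j + t * d j) / ε) :=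
      fun j => by rw [mul_assoc, Real.mul_self_sqrt (Real.exp_pos _).le]
    have e2 : ∀ j : Fin n, ((d j / ε) * Real.sqrt (Real.exp ((x j + t * d j) / ε))) ^ 2 =
        (d j / ε) ^ 2 * Real.exp ((x j + t * d j) / ε) := fun j => by
      rw [mul_pow, Real.sq_sqrt (Real.exp_pos _).le]
    have e3 : ∀ j : Fin n, (Real.sqrt (Real.exp ((x j + t * d j) / ε))) ^ 2 =
        Real.exp ((x j + t * d j) / ε) := fun j => Real.sq_sqrt (Real.exp_pos _).le
    simp only [e1, e2, e3] at this
    simpa [Sf, Sf1, Sf2] using this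
  have hS := Sf_pos ε x d t
  have : 0 ≤ Sf2 ε x d t * Sf ε x d t - Sf1 ε x d t * Sf1 ε x d t := by nlinarith
  positivity

private lemma Ff2_le (hε : 0 < ε) (t : ℝ) :
    ε * ((Sf2 ε x d t * Sf ε x d t - Sf1 ε x d t * Sf1 ε x d t) / Sf ε x d t ^ 2) ≤
      (∑ j, d j ^ 2) / ε := by
  have hS := Sf_pos ε x d t
  have hterm : ∀ j : Fin n, Real.exp ((x j + t * d j) / ε) ≤ Sf ε x d t := fun j =>
    Finset.single_le_sum (f := fun j => Real.exp ((x j + t * d j) / ε))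
      (fun j _ => (Real.exp_pos _).le) (mem_univ j)
  have hS2 : Sf2 ε x d t ≤ (∑ j, (d j / ε) ^ 2) * Sf ε x d t := by
    rw [Finset.sum_mul]
    refine Finset.sum_le_sum fun j _ => ?_
    exact mul_le_mul_of_nonneg_left (hterm j) (sq_nonneg _)
  have hK : (∑ j, (d j / ε) ^ 2) = (∑ j, d j ^ 2) / ε ^ 2 := by
    rw [Finset.sum_div]; exact Finset.sum_congr rfl fun j _ => by rw [div_pow]
  have h1 : (Sf2 ε x d t * Sf ε x d t - Sf1 ε x d t * Sf1 ε x d t) / Sf ε x d t ^ 2 ≤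
      Sf2 ε x d t / Sf ε x d t := by
    rw [div_le_div_iff₀ (by positivity) hS]
    nlinarith [sq_nonneg (Sf1 ε x d t), hS]
  have h2 : Sf2 ε x d t / Sf ε x d t ≤ (∑ j, d j ^ 2) / ε ^ 2 := by
    rw [div_le_iff₀ hS]
    calc Sf2 ε x d t ≤ (∑ j, (d j / ε) ^ 2) * Sf ε x d t := hS2
      _ = (∑ j, d j ^ 2) / ε ^ 2 * Sf ε x d t := by rw [hK]
  calc ε * ((Sf2 ε x d t * Sf ε x d t - Sf1 ε x d t * Sf1 ε x d t) / Sf ε x d t ^ 2)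
      ≤ ε * ((∑ j, d j ^ 2) / ε ^ 2) := by
        exact mul_le_mul_of_nonneg_left (h1.trans h2) hε.le
    _ = (∑ j, d j ^ 2) / ε := by field_simp

private lemma Ff_zero : Ff ε x d 0 = lse ε x := by
  simp [Ff, Sf, lse]

private lemma Ff_one (hε : 0 < ε) : Ff ε x d 1 = lse ε (fun i => x i + d i) := by
  simp [Ff, Sf, lse]

private lemma Ff1_zero (hε : 0 < ε) : Ff1 ε x d 0 = ∑ i, softmax ε x i * d i := by
  simp only [Ff1, Sf1, Sf, softmax, zero_mul, add_zero]
  rw [Finset.sum_div, Finset.mul_sum]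
  refine Finset.sum_congr rfl fun j _ => ?_
  field_simp

omit [NeZero n] in
private lemma neZero_case {P : Prop} (hn : n ≠ 0 → P) (h0 : n = 0 → P) : P := by
  by_cases h : n = 0
  · exact h0 h
  · exact hn h

end aux

section keylemmas

open Finset

variable {n : ℕ} {ε : ℝ}

private lemma bregman_upper (hε : 0 < ε) (x d : Fin n → ℝ) :
    lse ε (fun i => x i + d i) - lse ε x - ∑ i, softmax ε x i * d i ≤
      1 / (2 * ε) * ∑ i, d i ^ 2 := by
  rcases Nat.eq_zero_or_pos n with h0 | hpos
  · subst h0; simp [lse]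
  haveI : NeZero n := ⟨hpos.ne'⟩
  set C : ℝ := (∑ j, d j ^ 2) / ε with hC
  -- H t = Ff1 t - t * C is antitone
  have hH : Antitone (fun t => Ff1 ε x d t - t * C) := by
    refine antitone_of_deriv_nonpos ?_ ?_
    · intro t
      exact ((hasDerivAt_Ff1 ε x d t).sub ((hasDerivAt_id t).mul_const C)).differentiableAt
    · intro t
      rw [((hasDerivAt_Ff1 ε x d t).fun_sub
        (by simpa using (hasDerivAt_id t).mul_const C)).deriv]
      have := Ff2_le x d hε t
      linarith
  -- G t = Ff t - t * Ff1 0 - t^2 * (C/2) is antitone on [0,1]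
  have hG : AntitoneOn (fun t => Ff ε x d t - t * Ff1 ε x d 0 - t ^ 2 * (C / 2))
      (Set.Icc 0 1) := by
    have hderiv : ∀ t : ℝ, HasDerivAt (fun t => Ff ε x d t - t * Ff1 ε x d 0 - t ^ 2 * (C / 2))
        (Ff1 ε x d t - Ff1 ε x d 0 - t * C) t := by
      intro t
      have h1 := (hasDerivAt_Ff ε x d t).fun_sub ((hasDerivAt_id t).mul_const (Ff1 ε x d 0))
      have h2 : HasDerivAt (fun t : ℝ => t ^ 2 * (C / 2)) (t * C) t := by
        have := (hasDerivAt_pow 2 t).mul_const (C / 2)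
        exact this.congr_deriv (by norm_num; ring)
      have := h1.fun_sub h2
      exact this.congr_deriv (by simp)
    refine antitoneOn_of_deriv_nonpos (convex_Icc 0 1) ?_ ?_ ?_
    · exact fun t _ => ((hderiv t).continuousAt).continuousWithinAt
    · exact fun t _ => ((hderiv t).differentiableAt).differentiableWithinAt
    · intro t ht
      rw [interior_Icc] at ht
      rw [(hderiv t).deriv]
      have := hH (le_of_lt ht.1)
      simp only at this
      linarith
  have h01 := hG (Set.mem_Icc.2 ⟨le_refl 0, zero_le_one⟩) (Set.mem_Icc.2 ⟨zero_le_one, le_refl 1⟩)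
    zero_le_one
  norm_num at h01
  rw [Ff_zero, Ff_one x d hε, Ff1_zero x d hε] at h01
  have hCeq : C / 2 = 1 / (2 * ε) * ∑ i, d i ^ 2 := by
    rw [hC, div_div, one_div, inv_mul_eq_div, mul_comm ε 2]
  linarith [h01, hCeq.le]

private lemma bregman_lower (hε : 0 < ε) (x d : Fin n → ℝ) :
    0 ≤ lse ε (fun i => x i + d i) - lse ε x - ∑ i, softmax ε x i * d i := by
  rcases Nat.eq_zero_or_pos n with h0 | hpos
  · subst h0; simp [lse]
  haveI : NeZero n := ⟨hpos.ne'⟩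
  have hF1mono : Monotone (Ff1 ε x d) := by
    refine monotone_of_deriv_nonneg ?_ ?_
    · exact fun t => (hasDerivAt_Ff1 ε x d t).differentiableAt
    · intro t
      rw [(hasDerivAt_Ff1 ε x d t).deriv]
      exact Ff2_nonneg x d hε t
  have hG : MonotoneOn (fun t => Ff ε x d t - t * Ff1 ε x d 0) (Set.Icc 0 1) := by
    have hderiv : ∀ t : ℝ, HasDerivAt (fun t => Ff ε x d t - t * Ff1 ε x d 0)
        (Ff1 ε x d t - Ff1 ε x d 0) t := by
      intro t
      have := (hasDerivAt_Ff ε x d t).fun_sub ((hasDerivAt_id t).mul_const (Ff1 ε x d 0))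
      simpa using this
    refine monotoneOn_of_deriv_nonneg (convex_Icc 0 1) ?_ ?_ ?_
    · exact fun t _ => ((hderiv t).continuousAt).continuousWithinAt
    · exact fun t _ => ((hderiv t).differentiableAt).differentiableWithinAt
    · intro t ht
      rw [interior_Icc] at ht
      rw [(hderiv t).deriv]
      have := hF1mono (le_of_lt ht.1)
      linarith [hF1mono (le_of_lt ht.1 : (0:ℝ) ≤ t)]
  have h01 := hG (Set.mem_Icc.2 ⟨le_refl 0, zero_le_one⟩) (Set.mem_Icc.2 ⟨zero_le_one, le_refl 1⟩)
    zero_le_one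
  simp only [zero_mul, one_mul, sub_zero] at h01
  rw [Ff_zero, Ff_one x d hε, Ff1_zero x d hε] at h01
  linarith

end keylemmas

/-- The Bregman divergence of log-sum-exp is sandwiched between the squared
soft-max increment and the squared score increment:
`(ε/2)‖σ_ε(z) − σ_ε(z̄)‖₂² ≤ lse_ε(z) − lse_ε(z̄) − σ_ε(z̄)ᵀ(z − z̄) ≤ (1/(2ε))‖z − z̄‖₂²`. -/
theorem lse_bregman_sandwich (ε : ℝ) (hε : 0 < ε) (n : ℕ) (z zbar : Fin n → ℝ) :
    ε / 2 * ∑ i, (softmax ε z i - softmax ε zbar i) ^ 2 ≤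
        lse ε z - lse ε zbar - ∑ i, softmax ε zbar i * (z i - zbar i) ∧
      lse ε z - lse ε zbar - ∑ i, softmax ε zbar i * (z i - zbar i) ≤
        1 / (2 * ε) * ∑ i, (z i - zbar i) ^ 2 := by
  constructor
  · -- lower bound via cocoercivity
    set Δ : Fin n → ℝ := fun i => softmax ε z i - softmax ε zbar i with hΔ
    set u : Fin n → ℝ := fun i => z i - ε * Δ i with hu
    have hB := bregman_lower hε zbar (fun i => u i - zbar i)
    have heq1 : (fun i => zbar i + (u i - zbar i)) = u := by funext i; ring
    rw [heq1] at hB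
    have hA := bregman_upper hε z (fun i => u i - z i)
    have heq2 : (fun i => z i + (u i - z i)) = u := by funext i; ring
    rw [heq2] at hA
    -- sum identities
    have hs1 : ∑ i, softmax ε zbar i * (u i - zbar i) =
        ∑ i, softmax ε zbar i * (z i - zbar i) - ε * ∑ i, softmax ε zbar i * Δ i := by
      rw [Finset.mul_sum, ← Finset.sum_sub_distrib]
      exact Finset.sum_congr rfl fun i _ => by simp only [hu]; ring
    have hs2 : ∑ i, softmax ε z i * (u i - z i) = -(ε * ∑ i, softmax ε z i * Δ i) := by
      rw [Finset.mul_sum, ← Finset.sum_neg_distrib]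
      exact Finset.sum_congr rfl fun i _ => by simp only [hu]; ring
    have hs3 : ∑ i, (u i - z i) ^ 2 = ε ^ 2 * ∑ i, Δ i ^ 2 := by
      rw [Finset.mul_sum]
      exact Finset.sum_congr rfl fun i _ => by simp only [hu]; ring
    have hs4 : ∑ i, softmax ε z i * Δ i - ∑ i, softmax ε zbar i * Δ i = ∑ i, Δ i ^ 2 := by
      rw [← Finset.sum_sub_distrib]
      exact Finset.sum_congr rfl fun i _ => by simp only [hΔ]; ring
    rw [hs1] at hB
    rw [hs2, hs3] at hA
    have hq : 1 / (2 * ε) * (ε ^ 2 * ∑ i, Δ i ^ 2) = ε / 2 * ∑ i, Δ i ^ 2 := by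
      field_simp
    rw [hq] at hA
    have hs4' : ε * (∑ i, softmax ε z i * Δ i) - ε * (∑ i, softmax ε zbar i * Δ i) =
        ε * ∑ i, Δ i ^ 2 := by rw [← mul_sub, hs4]
    have hgoal : (∑ i, (softmax ε z i - softmax ε zbar i) ^ 2) = ∑ i, Δ i ^ 2 := rfl
    rw [hgoal]
    have htriv : ε * (∑ i, Δ i ^ 2) = 2 * (ε / 2 * ∑ i, Δ i ^ 2) := by ring
    linarith
  · have hA := bregman_upper hε zbar (fun i => z i - zbar i)
    have heq : (fun i => zbar i + (z i - zbar i)) = z := by funext i; ring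
    rw [heq] at hA
    exact hA
end

section
/- Induced strategy dynamics of EXP-D-RL: let ε > 0, γ > 0, let u : ℝ → ℝⁿ be continuous and let z : ℝ → ℝⁿ be differentiable with ż_i(t) = γ(u_i(t) − z_i(t)) for all t and all i. Define x(t) = σ_ε(z(t)). Then x is differentiable and for all t and all i, ẋ_i(t) = γε⁻¹·[x_i(t)·(u_i(t) − Σ_{j=1}^n x_j(t)·u_j(t)) − x_i(t)·(z_i(t) − Σ_{j=1}^n x_j(t)·z_j(t))]. -/
/-- Induced strategy dynamics of EXP-D-RL: if `ż_i = γ(u_i − z_i)` and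
`x(t) = σ_ε(z(t))`, then `x` is differentiable with
`ẋ_i = γ ε⁻¹ [x_i (u_i − Σ_j x_j u_j) − x_i (z_i − Σ_j x_j z_j)]`. -/
theorem induced_strategy_dynamics (ε γ : ℝ) (hε : 0 < ε) (hγ : 0 < γ) (n : ℕ)
    (u z : ℝ → Fin n → ℝ) (hu_cont : Continuous u)
    (hz : ∀ t i, HasDerivAt (fun s => z s i) (γ * (u t i - z t i)) t) :
    ∀ t i, HasDerivAt (fun s => softmax ε (z s) i)
      (γ * ε⁻¹ *
        (softmax ε (z t) i * (u t i - ∑ j, softmax ε (z t) j * u t j) -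
          softmax ε (z t) i * (z t i - ∑ j, softmax ε (z t) j * z t j))) t := by
  intro t i
  have hN : ∀ j : Fin n, HasDerivAt (fun s => Real.exp (z s j / ε))
      (Real.exp (z t j / ε) * (γ * (u t j - z t j) / ε)) t := fun j =>
    ((hz t j).div_const ε).exp
  have hD : HasDerivAt (fun s => ∑ j, Real.exp (z s j / ε))
      (∑ j, Real.exp (z t j / ε) * (γ * (u t j - z t j) / ε)) t :=
    HasDerivAt.fun_sum fun j _ => hN j
  have hDpos : ∀ s : ℝ, 0 < ∑ j, Real.exp (z s j / ε) := fun s =>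
    Finset.sum_pos (fun j _ => Real.exp_pos _) ⟨i, Finset.mem_univ i⟩
  have h : HasDerivAt (fun s => Real.exp (z s i / ε) / ∑ j, Real.exp (z s j / ε)) _ t :=
    (hN i).div hD (hDpos t).ne'
  convert h using 1
  · rfl
  simp only [softmax, Finset.sum_div]
  set D := ∑ j, Real.exp (z t j / ε) with hDdef
  have hDne : D ≠ 0 := (hDpos t).ne'
  have hε' : ε ≠ 0 := hε.ne'
  have hsum : ∑ j, Real.exp (z t j / ε) * (γ * (u t j - z t j) / ε)
      = (γ / ε) * ((∑ j, Real.exp (z t j / ε) * u t j)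
        - (∑ j, Real.exp (z t j / ε) * z t j)) := by
    rw [mul_sub, Finset.mul_sum, Finset.mul_sum, ← Finset.sum_sub_distrib]
    exact Finset.sum_congr rfl fun j _ => by ring
  rw [hsum]
  have h1 : ∀ f : Fin n → ℝ, ∑ j, Real.exp (z t j / ε) / D * f j
      = (∑ j, Real.exp (z t j / ε) * f j) / D := by
    intro f
    rw [Finset.sum_div]
    exact Finset.sum_congr rfl fun j _ => by ring
  rw [h1, h1]
  field_simp
  ring
end
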